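/- Let g be an element of PSL(2,ℂ) such that g ≠ 1 and g² ≠ 1. Then the centralizer of g in PSL(2,ℂ), i.e. the subgroup {x ∈ PSL(2,ℂ) : x·g = g·x}, is commutative. -/

import Mathlib

open Matrix

/-- `PSL(2,ℂ)`: the quotient of `SL(2,ℂ)` by its center `{I, -I}`. -/
abbrev PSL2C :=
  Matrix.SpecialLinearGroup (Fin 2) ℂ ⧸
    Subgroup.center (Matrix.SpecialLinearGroup (Fin 2) ℂ)


/-- Centralizer of a nonscalar 2×2 matrix is commutative. -/
lemma commutant_comm (A B C : Matrix (Fin 2) (Fin 2) ℂ)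
    (hA : ∀ r : ℂ, A ≠ r • 1) (hB : A * B = B * A) (hC : A * C = C * A) :
    B * C = C * B := by
  have hns : ¬(A 0 1 = 0 ∧ A 1 0 = 0 ∧ A 0 0 = A 1 1) := by
    rintro ⟨h1, h2, h3⟩
    refine hA (A 0 0) ?_
    ext i j
    fin_cases i <;> fin_cases j <;>
      simp [Matrix.one_apply, h1, h2, h3]
  have b00 := congrFun (congrFun hB 0) 0
  have b01 := congrFun (congrFun hB 0) 1
  have b10 := congrFun (congrFun hB 1) 0
  have c00 := congrFun (congrFun hC 0) 0
  have c01 := congrFun (congrFun hC 0) 1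
  have c10 := congrFun (congrFun hC 1) 0
  simp only [Matrix.mul_apply, Fin.sum_univ_two] at b00 b01 b10 c00 c01 c10
  have hb1 : A 0 1 * B 1 0 = A 1 0 * B 0 1 := by linear_combination b00
  have hb2 : B 0 1 * (A 0 0 - A 1 1) = A 0 1 * (B 0 0 - B 1 1) := by linear_combination b01
  have hb3 : A 1 0 * (B 0 0 - B 1 1) = B 1 0 * (A 0 0 - A 1 1) := by linear_combination b10
  have hc1 : A 0 1 * C 1 0 = A 1 0 * C 0 1 := by linear_combination c00
  have hc2 : C 0 1 * (A 0 0 - A 1 1) = A 0 1 * (C 0 0 - C 1 1) := by linear_combination c01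
  have hc3 : A 1 0 * (C 0 0 - C 1 1) = C 1 0 * (A 0 0 - A 1 1) := by linear_combination c10
  have key : B 0 1 * C 1 0 = C 0 1 * B 1 0 ∧
      C 0 1 * (B 0 0 - B 1 1) = B 0 1 * (C 0 0 - C 1 1) ∧
      B 1 0 * (C 0 0 - C 1 1) = C 1 0 * (B 0 0 - B 1 1) := by
    by_cases hb0 : A 0 1 = 0
    · by_cases hc0 : A 1 0 = 0
      · have had : A 0 0 - A 1 1 ≠ 0 := fun h => hns ⟨hb0, hc0, sub_eq_zero.mp h⟩
        have hB01 : B 0 1 = 0 :=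
          (mul_eq_zero.mp (by linear_combination hb2 + (B 0 0 - B 1 1) * hb0)).resolve_right had
        have hB10 : B 1 0 = 0 :=
          (mul_eq_zero.mp (by linear_combination -hb3 + (B 0 0 - B 1 1) * hc0)).resolve_right had
        have hC01 : C 0 1 = 0 :=
          (mul_eq_zero.mp (by linear_combination hc2 + (C 0 0 - C 1 1) * hb0)).resolve_right had
        have hC10 : C 1 0 = 0 :=
          (mul_eq_zero.mp (by linear_combination -hc3 + (C 0 0 - C 1 1) * hc0)).resolve_right had
        exact ⟨by rw [hB01, hC10, hB10, hC01], by rw [hB01, hC01]; ring,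
          by rw [hB10, hC10]; ring⟩
      · have hB01 : B 0 1 = 0 :=
          (mul_eq_zero.mp (by linear_combination -hb1 + B 1 0 * hb0)).resolve_left hc0
        have hC01 : C 0 1 = 0 :=
          (mul_eq_zero.mp (by linear_combination -hc1 + C 1 0 * hb0)).resolve_left hc0
        refine ⟨by rw [hB01, hC01]; ring, by rw [hB01, hC01]; ring, ?_⟩
        exact mul_left_cancel₀ hc0 (by linear_combination B 1 0 * hc3 - C 1 0 * hb3)
    · refine ⟨?_, ?_, ?_⟩
      · exact mul_left_cancel₀ hb0 (by linear_combination B 0 1 * hc1 - C 0 1 * hb1)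
      · exact mul_left_cancel₀ hb0 (by linear_combination B 0 1 * hc2 - C 0 1 * hb2)
      · refine mul_left_cancel₀ (mul_ne_zero hb0 hb0) ?_
        linear_combination (A 0 1 * (C 0 0 - C 1 1)) * hb1 - (A 1 0 * B 0 1) * hc2
          - (A 0 1 * (B 0 0 - B 1 1)) * hc1 + (A 1 0 * C 0 1) * hb2
  obtain ⟨g1, g2, g3⟩ := key
  ext i j
  fin_cases i <;> fin_cases j <;> simp only [Fin.zero_eta, Fin.mk_one, Fin.isValue, Matrix.mul_apply, Fin.sum_univ_two]
  · linear_combination g1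
  · linear_combination g2
  · linear_combination g3
  · linear_combination -g1


/-- A trace-zero 2×2 matrix of determinant 1 squares to `-1`. -/
lemma sq_neg_one (A : Matrix (Fin 2) (Fin 2) ℂ) (hdet : A.det = 1)
    (htr : A 0 0 + A 1 1 = 0) : A * A = -1 := by
  rw [Matrix.det_fin_two] at hdet
  ext i j
  fin_cases i <;> fin_cases j <;>
    simp only [Fin.zero_eta, Fin.mk_one, Fin.isValue, Matrix.mul_apply, Fin.sum_univ_two,
      Matrix.neg_apply, Matrix.one_apply_eq, Matrix.one_apply_ne (by decide : (0:Fin 2) ≠ 1),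
      Matrix.one_apply_ne (by decide : (1:Fin 2) ≠ 0), neg_zero]
  · linear_combination A 0 0 * htr - hdet
  · linear_combination A 0 1 * htr
  · linear_combination A 1 0 * htr
  · linear_combination A 1 1 * htr - hdet

/-- If x and g commute in PSL(2,ℂ) and tr g ≠ 0, the lifts commute as matrices. -/
lemma lift_commute (G X : Matrix.SpecialLinearGroup (Fin 2) ℂ)
    (htr : Matrix.trace (G : Matrix (Fin 2) (Fin 2) ℂ) ≠ 0)
    (h : (QuotientGroup.mk X : PSL2C) * QuotientGroup.mk G
        = QuotientGroup.mk G * QuotientGroup.mk X) :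
    (G : Matrix (Fin 2) (Fin 2) ℂ) * (X : Matrix (Fin 2) (Fin 2) ℂ)
      = (X : Matrix (Fin 2) (Fin 2) ℂ) * (G : Matrix (Fin 2) (Fin 2) ℂ) := by
  rw [← QuotientGroup.mk_mul, ← QuotientGroup.mk_mul, QuotientGroup.eq] at h
  obtain ⟨r, hr2, hr⟩ := Matrix.SpecialLinearGroup.mem_center_iff.mp h
  simp only [Fintype.card_fin] at hr2
  have key : ((G * X : Matrix.SpecialLinearGroup (Fin 2) ℂ) : Matrix (Fin 2) (Fin 2) ℂ)
      = ((X * G : Matrix.SpecialLinearGroup (Fin 2) ℂ) : Matrix (Fin 2) (Fin 2) ℂ)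
        * scalar (Fin 2) r := by
    rw [hr, ← Matrix.SpecialLinearGroup.coe_mul]
    congr 1
    group
    rfl
  rcases mul_eq_zero.mp (show (r - 1) * (r + 1) = 0 by linear_combination hr2) with h1 | h1
  · have hr1 : r = 1 := by linear_combination h1
    rw [hr1] at key
    simpa [Matrix.SpecialLinearGroup.coe_mul] using key
  · have hr1 : r = -1 := by linear_combination h1
    rw [hr1, map_neg, _root_.map_one, mul_neg, mul_one] at key
    have e1 : (G : Matrix (Fin 2) (Fin 2) ℂ) * (X : Matrix (Fin 2) (Fin 2) ℂ)
        = -((X : Matrix (Fin 2) (Fin 2) ℂ) * (G : Matrix (Fin 2) (Fin 2) ℂ)) := by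
      rw [← Matrix.SpecialLinearGroup.coe_mul G X, key, Matrix.SpecialLinearGroup.coe_mul]
    have hXi : (X : Matrix (Fin 2) (Fin 2) ℂ)
        * ((X⁻¹ : Matrix.SpecialLinearGroup (Fin 2) ℂ) : Matrix (Fin 2) (Fin 2) ℂ) = 1 := by
      rw [← Matrix.SpecialLinearGroup.coe_mul, mul_inv_cancel, Matrix.SpecialLinearGroup.coe_one]
    have hXi' : ((X⁻¹ : Matrix.SpecialLinearGroup (Fin 2) ℂ) : Matrix (Fin 2) (Fin 2) ℂ)
        * (X : Matrix (Fin 2) (Fin 2) ℂ) = 1 := by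
      rw [← Matrix.SpecialLinearGroup.coe_mul, inv_mul_cancel, Matrix.SpecialLinearGroup.coe_one]
    exfalso
    apply htr
    have e3 : Matrix.trace (G : Matrix (Fin 2) (Fin 2) ℂ)
        = -Matrix.trace (G : Matrix (Fin 2) (Fin 2) ℂ) := by
      calc Matrix.trace (G : Matrix (Fin 2) (Fin 2) ℂ)
          = Matrix.trace (((G : Matrix (Fin 2) (Fin 2) ℂ) * (X : Matrix (Fin 2) (Fin 2) ℂ)) * ((X⁻¹ : Matrix.SpecialLinearGroup (Fin 2) ℂ) : Matrix (Fin 2) (Fin 2) ℂ)) := by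
            rw [mul_assoc, hXi, mul_one]
        _ = -Matrix.trace (((X : Matrix (Fin 2) (Fin 2) ℂ) * (G : Matrix (Fin 2) (Fin 2) ℂ)) * ((X⁻¹ : Matrix.SpecialLinearGroup (Fin 2) ℂ) : Matrix (Fin 2) (Fin 2) ℂ)) := by
            rw [e1, neg_mul, Matrix.trace_neg]
        _ = -Matrix.trace (((X⁻¹ : Matrix.SpecialLinearGroup (Fin 2) ℂ) : Matrix (Fin 2) (Fin 2) ℂ) * ((X : Matrix (Fin 2) (Fin 2) ℂ) * (G : Matrix (Fin 2) (Fin 2) ℂ))) := by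
            rw [Matrix.trace_mul_comm]
        _ = -Matrix.trace (G : Matrix (Fin 2) (Fin 2) ℂ) := by
            rw [← mul_assoc, hXi', one_mul]
    linear_combination e3 / 2


lemma scalar_eq_smul_one (r : ℂ) : scalar (Fin 2) r = r • (1 : Matrix (Fin 2) (Fin 2) ℂ) := by
  ext i j
  by_cases h : i = j <;>
    simp [Matrix.scalar_apply, Matrix.diagonal, Matrix.one_apply, h]

/-- The centralizer of a nontrivial, non-involutive element of `PSL(2,ℂ)`
is commutative. -/
theorem stmt_7 (g : PSL2C) (hg : g ≠ 1) (hg2 : g ^ 2 ≠ 1) :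
    ∀ x y : PSL2C, x * g = g * x → y * g = g * y → x * y = y * x := by
  obtain ⟨G, rfl⟩ := QuotientGroup.mk_surjective g
  intro x y hx hy
  obtain ⟨X, rfl⟩ := QuotientGroup.mk_surjective x
  obtain ⟨Y, rfl⟩ := QuotientGroup.mk_surjective y
  have htr : Matrix.trace (G : Matrix (Fin 2) (Fin 2) ℂ) ≠ 0 := by
    intro h0
    apply hg2
    rw [Matrix.trace_fin_two] at h0
    have hGG : ((G * G : Matrix.SpecialLinearGroup (Fin 2) ℂ) : Matrix (Fin 2) (Fin 2) ℂ)
        = -1 := by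
      rw [Matrix.SpecialLinearGroup.coe_mul]
      exact sq_neg_one _ G.property h0
    have hmem : G ^ 2 ∈ Subgroup.center (Matrix.SpecialLinearGroup (Fin 2) ℂ) := by
      refine Matrix.SpecialLinearGroup.mem_center_iff.mpr ⟨-1, by norm_num, ?_⟩
      rw [sq, hGG, map_neg, _root_.map_one]
    calc (QuotientGroup.mk G : PSL2C) ^ 2 = QuotientGroup.mk (G ^ 2) := by
          rw [sq, sq, QuotientGroup.mk_mul]
      _ = 1 := QuotientGroup.eq_one_iff _ |>.mpr hmem
  have hnsc : ∀ r : ℂ, (G : Matrix (Fin 2) (Fin 2) ℂ) ≠ r • 1 := by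
    intro r hGr
    apply hg
    have hr2 : r ^ 2 = 1 := by
      have := G.property
      rw [hGr, Matrix.det_smul, Matrix.det_one, Fintype.card_fin, mul_one] at this
      exact this
    have hmem : G ∈ Subgroup.center (Matrix.SpecialLinearGroup (Fin 2) ℂ) :=
      Matrix.SpecialLinearGroup.mem_center_iff.mpr
        ⟨r, by simpa using hr2, by rw [scalar_eq_smul_one, ← hGr]⟩
    exact QuotientGroup.eq_one_iff _ |>.mpr hmem
  have hGX := lift_commute G X htr hx
  have hGY := lift_commute G Y htr hy
  have hXY : X * Y = Y * X := Subtype.ext (by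
    rw [Matrix.SpecialLinearGroup.coe_mul, Matrix.SpecialLinearGroup.coe_mul]
    exact commutant_comm _ _ _ hnsc hGX hGY)
  rw [← QuotientGroup.mk_mul, ← QuotientGroup.mk_mul, hXY]
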